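/- In the binary voting model with N agents, suppose the number of friendly agents is less than μ·N and the number of unfriendly agents is less than (1−μ)·N. Let e > 0, let Σ* be a regular strategy profile with 1 − A(Σ*) ≤ e, and let Σ' be any strategy profile with 1 − A(Σ') ≥ (B+1)·e. Then for every contingent agent n, ut_n(Σ') < ut_n(Σ*). -/

import Mathlib

namespace Voting

/-- The two world states: `L` (low) and `H` (high). -/
inductive WState : Type
  | L
  | H
deriving DecidableEq

instance : Fintype WState := ⟨{WState.L, WState.H}, fun x => by cases x <;> simp⟩

/-- The two alternatives: `A` (accept) and `R` (reject). -/
inductive Alt : Type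
  | A
  | R
deriving DecidableEq

instance : Fintype Alt := ⟨{Alt.A, Alt.R}, fun x => by cases x <;> simp⟩

/-- The shared parameters of a binary voting instance. -/
structure BParams where
  /-- majority threshold -/
  μ : ℝ
  hμ0 : 0 < μ
  hμ1 : μ < 1
  /-- prior of state `L` -/
  PL : ℝ
  /-- prior of state `H` -/
  PH : ℝ
  hPL : 0 < PL
  hPH : 0 < PH
  hPsum : PL + PH = 1
  /-- `Psig s ω` : probability of signal `s` in state `ω`; `true` is the signal `h`,
  `false` is the signal `l`. -/
  Psig : Bool → WState → ℝ
  hPsig : ∀ s ω, 0 ≤ Psig s ω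
  hPsigsum : ∀ ω, Psig false ω + Psig true ω = 1
  /-- positive correlation: `P_{hH} > P_{hL}` -/
  hcorr : Psig true WState.L < Psig true WState.H
  /-- upper bound of the utility functions -/
  B : ℕ
  hB : 0 < B

/-- A binary voting instance with `N` agents. -/
structure BInstance extends BParams where
  N : ℕ
  /-- the utility function of each agent -/
  u : Fin N → WState → Alt → ℕ
  hub : ∀ n ω a, u n ω a ≤ B
  huA : ∀ n, u n WState.L Alt.A < u n WState.H Alt.A
  huR : ∀ n, u n WState.H Alt.R < u n WState.L Alt.R

/-- A (mixed) strategy profile: for each agent, the probability of voting for `A`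
upon each signal. -/
abbrev Profile (I : BInstance) : Type := Fin I.N → Bool → ℝ

/-- All coordinates of the profile are genuine probabilities. -/
def ValidProfile (I : BInstance) (sp : Profile I) : Prop :=
  ∀ n s, 0 ≤ sp n s ∧ sp n s ≤ 1

/-- Probability that agent `n` votes for `A`, conditioned on the world state `ω`. -/
noncomputable def pA (I : BInstance) (sp : Profile I) (n : Fin I.N) (ω : WState) : ℝ :=
  I.Psig false ω * sp n false + I.Psig true ω * sp n true

open Finset in
/-- `lambdaA I sp ω` : the probability that at least `μ·N` agents vote for `A`,
conditioned on the world state `ω` (conditionally on the state, the votes are independent,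
agent `n` voting for `A` with probability `pA I sp n ω`). -/
noncomputable def lambdaA (I : BInstance) (sp : Profile I) (ω : WState) : ℝ :=
  ∑ v : Fin I.N → Bool,
    if I.μ * (I.N : ℝ) ≤ ((univ.filter fun n => v n = true).card : ℝ) then
      ∏ n, (if v n = true then pA I sp n ω else 1 - pA I sp n ω)
    else 0

/-- The fidelity of a strategy profile: the probability that the informed majority
decision is reached. -/
noncomputable def fid (I : BInstance) (sp : Profile I) : ℝ :=
  I.PL * (1 - lambdaA I sp WState.L) + I.PH * lambdaA I sp WState.H

/-- The ex-ante expected utility of agent `n` under profile `sp`. -/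
noncomputable def ut (I : BInstance) (sp : Profile I) (n : Fin I.N) : ℝ :=
  I.PL * (lambdaA I sp WState.L * (I.u n WState.L Alt.A : ℝ)
      + (1 - lambdaA I sp WState.L) * (I.u n WState.L Alt.R : ℝ))
    + I.PH * (lambdaA I sp WState.H * (I.u n WState.H Alt.A : ℝ)
      + (1 - lambdaA I sp WState.H) * (I.u n WState.H Alt.R : ℝ))

/-- A friendly agent prefers `A` in both states. -/
def Friendly (I : BInstance) (n : Fin I.N) : Prop :=
  ∀ ω, I.u n ω Alt.R < I.u n ω Alt.A

/-- An unfriendly agent prefers `R` in both states. -/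
def Unfriendly (I : BInstance) (n : Fin I.N) : Prop :=
  ∀ ω, I.u n ω Alt.A < I.u n ω Alt.R

/-- A contingent agent prefers `A` in state `H` and `R` in state `L`. -/
def Contingent (I : BInstance) (n : Fin I.N) : Prop :=
  I.u n WState.H Alt.R < I.u n WState.H Alt.A ∧ I.u n WState.L Alt.A < I.u n WState.L Alt.R

/-- A profile is regular if every friendly agent always votes for `A` and every
unfriendly agent always votes for `R`. -/
def Regular (I : BInstance) (sp : Profile I) : Prop :=
  (∀ n, Friendly I n → ∀ s, sp n s = 1) ∧ (∀ n, Unfriendly I n → ∀ s, sp n s = 0)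

/-- `ε`-strong Bayes Nash Equilibrium: no coalition `D` can deviate so that no member
is worse off and some member gains more than `ε`. -/
def IsEpsBNE (I : BInstance) (sp : Profile I) (ε : ℝ) : Prop :=
  ¬ ∃ (D : Set (Fin I.N)) (sp' : Profile I),
      ValidProfile I sp' ∧
      (∀ n, n ∉ D → sp' n = sp n) ∧
      (∀ n ∈ D, ut I sp n ≤ ut I sp' n) ∧
      (∃ n ∈ D, ut I sp n + ε < ut I sp' n)

/-- Number of friendly agents. -/
noncomputable def friendlyCount (I : BInstance) : ℕ := {n | Friendly I n}.ncard

/-- Number of unfriendly agents. -/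
noncomputable def unfriendlyCount (I : BInstance) : ℕ := {n | Unfriendly I n}.ncard

/-- Number of contingent agents. -/
noncomputable def contingentCount (I : BInstance) : ℕ := {n | Contingent I n}.ncard

lemma pA_mem (I : BInstance) (sp : Profile I) (hval : ValidProfile I sp)
    (n : Fin I.N) (ω : WState) : 0 ≤ pA I sp n ω ∧ pA I sp n ω ≤ 1 := by
  have h := I.hPsigsum ω
  have h0f := I.hPsig false ω
  have h0t := I.hPsig true ω
  have hf := hval n false
  have ht := hval n true
  constructor
  · exact add_nonneg (mul_nonneg h0f hf.1) (mul_nonneg h0t ht.1)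
  · have h1 := mul_le_mul_of_nonneg_left hf.2 h0f
    have h2 := mul_le_mul_of_nonneg_left ht.2 h0t
    unfold pA
    nlinarith

lemma prod_if_nonneg (I : BInstance) (sp : Profile I) (hval : ValidProfile I sp)
    (ω : WState) (v : Fin I.N → Bool) :
    0 ≤ ∏ n, (if v n = true then pA I sp n ω else 1 - pA I sp n ω) := by
  apply Finset.prod_nonneg
  intro n _
  split
  · exact (pA_mem I sp hval n ω).1
  · linarith [(pA_mem I sp hval n ω).2]

lemma lambdaA_nonneg (I : BInstance) (sp : Profile I) (hval : ValidProfile I sp)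
    (ω : WState) : 0 ≤ lambdaA I sp ω := by
  apply Finset.sum_nonneg
  intro v _
  split
  · exact prod_if_nonneg I sp hval ω v
  · exact le_refl _

lemma lambdaA_le_one (I : BInstance) (sp : Profile I) (hval : ValidProfile I sp)
    (ω : WState) : lambdaA I sp ω ≤ 1 := by
  have key : ∑ v : Fin I.N → Bool,
      ∏ n, (if v n = true then pA I sp n ω else 1 - pA I sp n ω) = 1 := by
    have h := Finset.prod_univ_sum (fun _ : Fin I.N => (Finset.univ : Finset Bool))
      (fun n b => if b = true then pA I sp n ω else 1 - pA I sp n ω)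
    simp only [Fintype.piFinset_univ] at h
    rw [← h]
    apply Finset.prod_eq_one
    intro n _
    rw [Fintype.sum_bool]
    simp
  rw [← key]
  apply Finset.sum_le_sum
  intro v _
  split
  · exact le_refl _
  · exact prod_if_nonneg I sp hval ω v

lemma keyineq (PL PH a b a' b' uLA uLR uHA uHR Bc e : ℝ)
    (hPL : 0 < PL) (hPH : 0 < PH)
    (ha0 : 0 ≤ a) (hb1 : b ≤ 1) (ha'0 : 0 ≤ a') (hb'1 : b' ≤ 1)
    (hdL : uLA + 1 ≤ uLR) (hBL : uLR - uLA ≤ Bc)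
    (hdH : uHR + 1 ≤ uHA) (hBH : uHA - uHR ≤ Bc)
    (he : 0 < e)
    (hE1 : PL * a' + PH * (1 - b') ≤ e)
    (hE2 : (Bc + 1) * e ≤ PL * a + PH * (1 - b)) :
    PL * (a * uLA + (1 - a) * uLR) + PH * (b * uHA + (1 - b) * uHR)
      < PL * (a' * uLA + (1 - a') * uLR) + PH * (b' * uHA + (1 - b') * uHR) := by
  have hBc : (1 : ℝ) ≤ Bc := by linarith
  have h1 : PL * a ≤ PL * a * (uLR - uLA) := by
    nlinarith [mul_nonneg (mul_nonneg hPL.le ha0) (by linarith : (0:ℝ) ≤ uLR - uLA - 1)]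
  have h2 : PH * (1 - b) ≤ PH * (1 - b) * (uHA - uHR) := by
    nlinarith [mul_nonneg (mul_nonneg hPH.le (by linarith : (0:ℝ) ≤ 1 - b))
      (by linarith : (0:ℝ) ≤ uHA - uHR - 1)]
  have h3 : PL * a' * (uLR - uLA) ≤ Bc * (PL * a') := by
    nlinarith [mul_nonneg (mul_nonneg hPL.le ha'0) (by linarith : (0:ℝ) ≤ Bc - (uLR - uLA))]
  have h4 : PH * (1 - b') * (uHA - uHR) ≤ Bc * (PH * (1 - b')) := by
    nlinarith [mul_nonneg (mul_nonneg hPH.le (by linarith : (0:ℝ) ≤ 1 - b'))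
      (by linarith : (0:ℝ) ≤ Bc - (uHA - uHR))]
  have hBe : Bc * (PL * a') + Bc * (PH * (1 - b')) ≤ Bc * e := by
    have := mul_le_mul_of_nonneg_left hE1 (by linarith : (0:ℝ) ≤ Bc)
    linarith [this]
  have expand :
      (PL * (a' * uLA + (1 - a') * uLR) + PH * (b' * uHA + (1 - b') * uHR))
        - (PL * (a * uLA + (1 - a) * uLR) + PH * (b * uHA + (1 - b) * uHR))
      = (PL * a * (uLR - uLA) - PL * a' * (uLR - uLA))
        + (PH * (1 - b) * (uHA - uHR) - PH * (1 - b') * (uHA - uHR)) := by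
    ring
  linarith [expand, h1, h2, h3, h4, hBe, hE2]

/-- Claim 2 in the proof of Lemma 1. Suppose the friendly agents are
fewer than `μ·N` and the unfriendly agents are fewer than `(1-μ)·N`. If a regular profile
`sp₁` has error rate `1 - A(sp₁) ≤ e` while another profile `sp₂` has error rate
`1 - A(sp₂) ≥ (B+1)·e` for some `e > 0`, then every contingent agent strictly prefers
`sp₁` to `sp₂`. -/
theorem contingent_prefers_high_fidelity (I : BInstance)
    (hF : (friendlyCount I : ℝ) < I.μ * (I.N : ℝ))
    (hU : (unfriendlyCount I : ℝ) < (1 - I.μ) * (I.N : ℝ))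
    (e : ℝ) (he : 0 < e)
    (sp₁ : Profile I) (hval₁ : ValidProfile I sp₁) (hreg₁ : Regular I sp₁)
    (h₁ : 1 - fid I sp₁ ≤ e)
    (sp₂ : Profile I) (hval₂ : ValidProfile I sp₂)
    (h₂ : ((I.B : ℝ) + 1) * e ≤ 1 - fid I sp₂) :
    ∀ n, Contingent I n → ut I sp₂ n < ut I sp₁ n := by
  intro n hn
  have ha0 := lambdaA_nonneg I sp₂ hval₂ WState.L
  have hb1 := lambdaA_le_one I sp₂ hval₂ WState.H
  have ha'0 := lambdaA_nonneg I sp₁ hval₁ WState.L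
  have hb'1 := lambdaA_le_one I sp₁ hval₁ WState.H
  have hdL : ((I.u n WState.L Alt.A : ℝ)) + 1 ≤ (I.u n WState.L Alt.R : ℝ) := by
    have h : I.u n WState.L Alt.A + 1 ≤ I.u n WState.L Alt.R := hn.2
    exact_mod_cast h
  have hdH : ((I.u n WState.H Alt.R : ℝ)) + 1 ≤ (I.u n WState.H Alt.A : ℝ) := by
    have h : I.u n WState.H Alt.R + 1 ≤ I.u n WState.H Alt.A := hn.1
    exact_mod_cast h
  have hBL : (I.u n WState.L Alt.R : ℝ) - (I.u n WState.L Alt.A : ℝ) ≤ (I.B : ℝ) := by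
    have h1 : (I.u n WState.L Alt.R : ℝ) ≤ (I.B : ℝ) := by exact_mod_cast I.hub n WState.L Alt.R
    have h2 : (0:ℝ) ≤ (I.u n WState.L Alt.A : ℝ) := Nat.cast_nonneg _
    linarith
  have hBH : (I.u n WState.H Alt.A : ℝ) - (I.u n WState.H Alt.R : ℝ) ≤ (I.B : ℝ) := by
    have h1 : (I.u n WState.H Alt.A : ℝ) ≤ (I.B : ℝ) := by exact_mod_cast I.hub n WState.H Alt.A
    have h2 : (0:ℝ) ≤ (I.u n WState.H Alt.R : ℝ) := Nat.cast_nonneg _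
    linarith
  have hE1 : I.PL * lambdaA I sp₁ WState.L + I.PH * (1 - lambdaA I sp₁ WState.H) ≤ e := by
    have hfid : 1 - fid I sp₁
        = I.PL * lambdaA I sp₁ WState.L + I.PH * (1 - lambdaA I sp₁ WState.H) := by
      unfold fid
      linear_combination (-1 : ℝ) * I.hPsum
    linarith [hfid, h₁]
  have hE2 : ((I.B : ℝ) + 1) * e
      ≤ I.PL * lambdaA I sp₂ WState.L + I.PH * (1 - lambdaA I sp₂ WState.H) := by
    have hfid : 1 - fid I sp₂
        = I.PL * lambdaA I sp₂ WState.L + I.PH * (1 - lambdaA I sp₂ WState.H) := by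
      unfold fid
      linear_combination (-1 : ℝ) * I.hPsum
    linarith [hfid, h₂]
  exact keyineq I.PL I.PH (lambdaA I sp₂ WState.L) (lambdaA I sp₂ WState.H)
    (lambdaA I sp₁ WState.L) (lambdaA I sp₁ WState.H)
    (I.u n WState.L Alt.A : ℝ) (I.u n WState.L Alt.R : ℝ)
    (I.u n WState.H Alt.A : ℝ) (I.u n WState.H Alt.R : ℝ)
    (I.B : ℝ) e I.hPL I.hPH ha0 hb1 ha'0 hb'1 hdL hBL hdH hBH he hE1 hE2

end Voting
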